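/- Let H be a finite solvable permutation group of odd order acting faithfully on a finite nonempty set Ω. Then there exists a nonempty subset Δ ⊆ Ω such that π(H) = π(|H : H_Δ|). -/

import Mathlib

open Pointwise
open scoped commutatorElement

namespace GluckOdd

/-- A group is not the union of two proper subgroups. -/
lemma subgroup_cover {M : Type} [Group M] (H₁ H₂ : Subgroup M)
    (h : ∀ m : M, m ∈ H₁ ∨ m ∈ H₂) : (∀ m : M, m ∈ H₁) ∨ (∀ m : M, m ∈ H₂) := by
  by_contra hc
  push_neg at hc
  obtain ⟨⟨a, ha⟩, ⟨b, hb⟩⟩ := hc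
  have ha2 : a ∈ H₂ := (h a).resolve_left ha
  have hb1 : b ∈ H₁ := (h b).resolve_right hb
  rcases h (a * b) with hab | hab
  · exact ha ((mul_mem_cancel_right hb1).mp hab)
  · exact hb ((mul_mem_cancel_left ha2).mp hab)

lemma odd_of_dvd {d n : ℕ} (hd : d ∣ n) (hn : Odd n) : Odd d := by
  rcases Nat.even_or_odd d with he | ho
  · exfalso
    rw [Nat.not_even_iff_odd.symm] at hn
    exact hn ((even_iff_two_dvd.mp he).trans hd |> even_iff_two_dvd.mpr)
  · exact ho

lemma eq_one_of_sq {M : Type*} [Group M] [Finite M] (hodd : Odd (Nat.card M))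
    {g : M} (hg : g * g = 1) : g = 1 := by
  have h1 : orderOf g ∣ 2 := orderOf_dvd_iff_pow_eq_one.mpr (by rwa [pow_two])
  have h2 : orderOf g ∣ Nat.card M := orderOf_dvd_natCard g
  rcases (Nat.dvd_prime Nat.prime_two).mp h1 with h | h
  · exact orderOf_eq_one_iff.mp h
  · exfalso
    rw [h] at h2
    rw [Nat.odd_iff] at hodd
    omega

lemma card_lt_of_surj {α β : Type} [Finite α] (f : α → β) (hf : Function.Surjective f)
    {a₁ a₂ : α} (hne : a₁ ≠ a₂) (heq : f a₁ = f a₂) : Nat.card β < Nat.card α := by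
  have hsurj : Function.Surjective (fun a : {a : α // a ≠ a₂} => f a.1) := by
    intro b
    obtain ⟨a, rfl⟩ := hf b
    by_cases ha : a = a₂
    · exact ⟨⟨a₁, hne⟩, by simp only [heq, ha]⟩
    · exact ⟨⟨a, ha⟩, rfl⟩
  have h1 : Nat.card β ≤ Nat.card {a : α // a ≠ a₂} :=
    Nat.card_le_card_of_surjective _ hsurj
  have h2 : Nat.card {a : α // a ≠ a₂} < Nat.card α := by
    have he : Nat.card {a : α // a ≠ a₂} = ({a₂}ᶜ : Set α).ncard := by
      rw [← Nat.card_coe_set_eq]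
      exact Nat.card_congr (Equiv.subtypeEquivRight (fun a => by simp))
    rw [he]
    have := Set.ncard_lt_ncard (show ({a₂}ᶜ : Set α) ⊂ Set.univ by
      constructor
      · exact Set.subset_univ _
      · intro hsub
        have := hsub (Set.mem_univ a₂)
        simp at this) (Set.finite_univ)
    rwa [Set.ncard_univ] at this
  omega

lemma smul_val_image {G Ω : Type} [Group G] [MulAction G Ω] (A : SubMulAction G Ω) (g : G)
    (D : Set A) : g • (Subtype.val '' D) = Subtype.val '' ((g • D : Set A)) := by
  ext x
  constructor
  · rintro ⟨y, ⟨z, hz, rfl⟩, rfl⟩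
    exact ⟨g • z, Set.smul_mem_smul_set hz, (A.val_smul g z)⟩
  · rintro ⟨y, ⟨z, hz, rfl⟩, rfl⟩
    exact ⟨z, ⟨z, hz, rfl⟩, (A.val_smul g z).symm⟩

lemma smul_set_of_val {G Ω : Type} [Group G] [MulAction G Ω] (A : SubMulAction G Ω) (g : G)
    (D : Set A) (h : g • (Subtype.val '' D) = Subtype.val '' D) : g • D = D := by
  rw [smul_val_image] at h
  exact Set.image_injective.mpr Subtype.coe_injective h

lemma ncard_smul_set {G Ω : Type} [Group G] [MulAction G Ω] (g : G) (s : Set Ω) :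
    (g • s).ncard = s.ncard := by
  rw [← Set.image_smul]
  exact Set.ncard_image_of_injective s (MulAction.injective g)


lemma affine (G Ω : Type) [Group G] [Finite G] [Finite Ω] [MulAction G Ω]
    (hfaith : ∀ g : G, (∀ x : Ω, g • x = x) → g = 1)
    (hsolv : Group.IsSolvable G)
    (hodd : Odd (Nat.card G))
    (p e : ℕ) (hp : p.Prime) (hp2 : p ≠ 2)
    (N : Subgroup G) (hnorm : N.Normal)
    (hcomm : ∀ a b : G, a ∈ N → b ∈ N → a * b = b * a)
    (hpow : ∀ a ∈ N, a ^ (p ^ e) = 1)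
    (a₀ : G) (ha₀N : a₀ ∈ N) (ha₀ : orderOf a₀ = p)
    (x₀ : Ω) (htrans : ∀ y : Ω, ∃ v ∈ N, v • x₀ = y)
    (IH : ∀ (G₂ Ω₂ : Type) [Group G₂] [Finite G₂] [Finite Ω₂] [MulAction G₂ Ω₂],
      Group.IsSolvable G₂ → Odd (Nat.card G₂) → Nat.card Ω₂ < Nat.card Ω →
      ∃ Δ : Set Ω₂, ∀ g : G₂, g • Δ = Δ → ∀ x : Ω₂, g • x = x) :
    ∃ Δ : Set Ω, ∀ g : G, g • Δ = Δ → g = 1 := by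
  classical
  haveI := hsolv
  letI : CommGroup ↥N :=
    { (inferInstance : Group ↥N) with
      mul_comm := fun a b => Subtype.ext (hcomm a b a.2 b.2) }
  have hNodd : Odd (Nat.card ↥N) := odd_of_dvd (Subgroup.card_subgroup_dvd_card N) hodd
  -- the action of N is free
  have hfree : ∀ v : G, v ∈ N → v • x₀ = x₀ → v = 1 := by
    intro v hv hvx
    apply hfaith
    intro y
    obtain ⟨w, hw, rfl⟩ := htrans y
    rw [← mul_smul, hcomm v w hv hw, mul_smul, hvx]
  -- labels
  have hlabex : ∀ y : Ω, ∃ v : ↥N, (v : G) • x₀ = y := by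
    intro y; obtain ⟨v, hv, h⟩ := htrans y; exact ⟨⟨v, hv⟩, h⟩
  let lab : Ω → ↥N := fun y => Classical.choose (hlabex y)
  have hlab : ∀ y : Ω, (lab y : G) • x₀ = y := fun y => Classical.choose_spec (hlabex y)
  have hlab_uniq : ∀ (v : ↥N) (y : Ω), (v : G) • x₀ = y → v = lab y := by
    intro v y h
    have h2 : ((lab y : G)⁻¹ * (v : G)) • x₀ = x₀ := by
      rw [mul_smul, h, inv_smul_eq_iff, hlab y]
    have h3 := hfree _ (mul_mem (inv_mem (lab y).2) v.2) h2
    exact (Subtype.ext (inv_mul_eq_one.mp h3)).symm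
  have hlab_x₀ : lab x₀ = 1 := (hlab_uniq 1 x₀ (by simp)).symm
  have hlab_mul : ∀ (w : ↥N) (y : Ω), lab ((w : G) • y) = w * lab y := by
    intro w y
    refine (hlab_uniq (w * lab y) _ ?_).symm
    rw [Subgroup.coe_mul, mul_smul, hlab y]
  -- setoid of plus/minus pairs
  let r : Ω → Ω → Prop := fun x y => lab y = lab x ∨ lab y = (lab x)⁻¹
  have hrequiv : Equivalence r := by
    constructor
    · intro x; exact Or.inl rfl
    · intro x y h
      rcases h with h | h
      · exact Or.inl h.symm
      · right; rw [h, inv_inv]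
    · intro x y z hxy hyz
      rcases hxy with h | h
      · rcases hyz with h' | h'
        · exact Or.inl (by rw [h', h])
        · exact Or.inr (by rw [h', h])
      · rcases hyz with h' | h'
        · exact Or.inr (by rw [h', h])
        · exact Or.inl (by rw [h', h, inv_inv])
  let s : Setoid Ω := ⟨r, hrequiv⟩
  let P := Quotient s
  let mk : Ω → P := Quotient.mk s
  -- the stabilizer of x₀
  let G₀ := MulAction.stabilizer G x₀
  have hG₀ : ∀ h : ↥G₀, (h : G) • x₀ = x₀ := fun h => h.2
  have hG₀' : ∀ h : ↥G₀, (h : G)⁻¹ • x₀ = x₀ := by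
    intro h; rw [inv_smul_eq_iff, hG₀ h]
  have hconjmem : ∀ (h : ↥G₀) (w : ↥N), (h : G) * (w : G) * (h : G)⁻¹ ∈ N :=
    fun h w => hnorm.conj_mem w.1 w.2 h
  let cj : ↥G₀ → ↥N → ↥N := fun h w => ⟨(h : G) * (w : G) * (h : G)⁻¹, hconjmem h w⟩
  have hcj_mul : ∀ (h : ↥G₀) (w₁ w₂ : ↥N), cj h (w₁ * w₂) = cj h w₁ * cj h w₂ := by
    intro h w₁ w₂
    apply Subtype.ext
    show (h : G) * ((w₁ : G) * (w₂ : G)) * (h : G)⁻¹ =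
      ((h : G) * (w₁ : G) * (h : G)⁻¹) * ((h : G) * (w₂ : G) * (h : G)⁻¹)
    group
  have hcj_inv : ∀ (h : ↥G₀) (w : ↥N), cj h w⁻¹ = (cj h w)⁻¹ := by
    intro h w
    apply Subtype.ext
    show (h : G) * (w : G)⁻¹ * (h : G)⁻¹ = ((h : G) * (w : G) * (h : G)⁻¹)⁻¹
    group
  have hlab_conj : ∀ (h : ↥G₀) (x : Ω), lab ((h : G) • x) = cj h (lab x) := by
    intro h x
    refine (hlab_uniq _ _ ?_).symm
    show ((h : G) * (lab x : G) * (h : G)⁻¹) • x₀ = (h : G) • x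
    rw [mul_smul, mul_smul, hG₀' h, hlab x]
  -- action of the stabilizer on pairs
  let act : ↥G₀ → P → P := fun h => Quotient.lift (fun x => mk ((h : G) • x))
    (by
      intro x y hxy
      apply Quotient.sound
      have hxy' : lab y = lab x ∨ lab y = (lab x)⁻¹ := hxy
      rcases hxy' with h1 | h1
      · exact Or.inl (by rw [hlab_conj, hlab_conj, h1])
      · exact Or.inr (by rw [hlab_conj, hlab_conj, h1, hcj_inv]))
  letI actInst : MulAction ↥G₀ P :=
    { smul := act
      one_smul := fun q => Quotient.inductionOn q (fun x => by
        show mk (((1 : ↥G₀) : G) • x) = mk x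
        rw [OneMemClass.coe_one, one_smul])
      mul_smul := fun h₁ h₂ q => Quotient.inductionOn q (fun x => by
        show mk (((h₁ * h₂ : ↥G₀) : G) • x) = mk ((h₁ : G) • ((h₂ : G) • x))
        rw [Subgroup.coe_mul, mul_smul]) }
  have hsmulP : ∀ (h : ↥G₀) (x : Ω), h • (mk x) = mk ((h : G) • x) := fun h x => rfl
  -- cardinality
  let aN : ↥N := ⟨a₀, ha₀N⟩
  have hy12 : a₀ • x₀ ≠ a₀⁻¹ • x₀ := by
    intro h
    have h2 : (a₀ * a₀) • x₀ = x₀ := by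
      rw [mul_smul, h, smul_inv_smul]
    have h3 := hfree _ (mul_mem ha₀N ha₀N) h2
    have h4 : orderOf a₀ ∣ 2 := orderOf_dvd_iff_pow_eq_one.mpr (by rwa [pow_two])
    rw [ha₀] at h4
    exact hp2 ((Nat.prime_dvd_prime_iff_eq hp Nat.prime_two).mp h4)
  have hmkeq : mk (a₀ • x₀) = mk (a₀⁻¹ • x₀) := by
    apply Quotient.sound
    have h1 : lab (a₀ • x₀) = aN := (hlab_uniq aN _ rfl).symm
    have h2 : lab (a₀⁻¹ • x₀) = aN⁻¹ := (hlab_uniq aN⁻¹ _ rfl).symm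
    exact Or.inr (by rw [h1, h2])
  have hcardP : Nat.card P < Nat.card Ω :=
    card_lt_of_surj mk (fun q => Quotient.exists_rep q) hy12 hmkeq
  -- apply the induction hypothesis to the pair action
  obtain ⟨S, hS⟩ := IH ↥G₀ P inferInstance
    (odd_of_dvd (Subgroup.card_subgroup_dvd_card G₀) hodd) hcardP
  -- the class of x₀
  let q₀ : P := mk x₀
  have hq₀fix : ∀ h : ↥G₀, h • q₀ = q₀ := by
    intro h
    show mk ((h : G) • x₀) = mk x₀
    rw [hG₀ h]
  have hmk_x₀ : ∀ x : Ω, mk x = q₀ ↔ x = x₀ := by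
    intro x
    constructor
    · intro h
      have hr : lab x₀ = lab x ∨ lab x₀ = (lab x)⁻¹ := Quotient.exact h
      have hl1 : lab x = 1 := by
        rcases hr with h1 | h1
        · rw [hlab_x₀] at h1; exact h1.symm
        · rw [hlab_x₀] at h1
          have := congrArg (·⁻¹) h1
          simpa using this.symm
      rw [← hlab x, hl1, OneMemClass.coe_one, one_smul]
    · rintro rfl; rfl
  -- toggle the class of x₀ in S to adjust cardinality
  let Dset : Set P → Set Ω := fun S' => {x | mk x ∈ S'}
  have htoggle : ∃ T : Set P, (∀ h : ↥G₀, h • T = T → h • S = S) ∧ ¬ (p ∣ (Dset T).ncard) := by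
    by_cases hdvd : p ∣ (Dset S).ncard
    · by_cases hq₀ : q₀ ∈ S
      · refine ⟨S \ {q₀}, ?_, ?_⟩
        · intro h hT
          have h1 : h • (S \ {q₀}) = (h • S) \ {q₀} := by
            rw [Set.smul_set_sdiff, Set.smul_set_singleton, hq₀fix h]
          rw [h1] at hT
          have hq₀hS : q₀ ∈ h • S := by
            rw [Set.mem_smul_set_iff_inv_smul_mem, hq₀fix h⁻¹]; exact hq₀
          ext q
          by_cases hq : q = q₀
          · subst hq; simp only [hq₀hS, hq₀, iff_true]
          · constructor
            · intro hqh
              have h2 : q ∈ (h • S) \ {q₀} := ⟨hqh, hq⟩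
              rw [hT] at h2; exact h2.1
            · intro hqS
              have h2 : q ∈ S \ {q₀} := ⟨hqS, hq⟩
              rw [← hT] at h2; exact h2.1
        · have hD : Dset (S \ {q₀}) = Dset S \ {x₀} := by
            ext x
            simp only [Dset, Set.mem_setOf_eq, Set.mem_diff, Set.mem_singleton_iff]
            rw [hmk_x₀ x]
          have hx₀mem : x₀ ∈ Dset S := hq₀
          rw [hD, Set.ncard_diff_singleton_of_mem hx₀mem]
          intro hcon
          have h2 := hp.two_le
          have hpos : 0 < (Dset S).ncard := (Set.ncard_pos (Set.toFinite _)).mpr ⟨x₀, hx₀mem⟩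
          have hsub : (Dset S).ncard - ((Dset S).ncard - 1) = 1 := by omega
          have hd1 := Nat.dvd_sub hdvd hcon
          rw [hsub] at hd1
          have := Nat.le_of_dvd one_pos hd1
          omega
      · refine ⟨S ∪ {q₀}, ?_, ?_⟩
        · intro h hT
          have h1 : h • (S ∪ {q₀}) = (h • S) ∪ {q₀} := by
            rw [Set.smul_set_union, Set.smul_set_singleton, hq₀fix h]
          rw [h1] at hT
          have hq₀hS : q₀ ∉ h • S := by
            rw [Set.mem_smul_set_iff_inv_smul_mem, hq₀fix h⁻¹]; exact hq₀
          ext q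
          by_cases hq : q = q₀
          · subst hq; simp only [hq₀hS, hq₀]
          · constructor
            · intro hqh
              have h2 : q ∈ (h • S) ∪ {q₀} := Or.inl hqh
              rw [hT] at h2
              rcases h2 with h2 | h2
              · exact h2
              · exact absurd h2 hq
            · intro hqS
              have h2 : q ∈ S ∪ {q₀} := Or.inl hqS
              rw [← hT] at h2
              rcases h2 with h2 | h2
              · exact h2
              · exact absurd h2 hq
        · have hD : Dset (S ∪ {q₀}) = insert x₀ (Dset S) := by
            ext x
            simp only [Dset, Set.mem_setOf_eq, Set.mem_union, Set.mem_singleton_iff,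
              Set.mem_insert_iff]
            rw [hmk_x₀ x]
            exact Or.comm
          have hx₀mem : x₀ ∉ Dset S := hq₀
          rw [hD, Set.ncard_insert_of_notMem hx₀mem]
          intro hcon
          have h2 := hp.two_le
          have hsub : ((Dset S).ncard + 1) - (Dset S).ncard = 1 := by omega
          have hd1 := Nat.dvd_sub hcon hdvd
          rw [hsub] at hd1
          have := Nat.le_of_dvd one_pos hd1
          omega
    · exact ⟨S, fun h h' => h', hdvd⟩
  obtain ⟨T, hTs, hTcard⟩ := htoggle
  refine ⟨Dset T, ?_⟩
  intro g hgΔ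
  -- decompose g = v * h with v in N and h in the stabilizer
  set Δ : Set Ω := Dset T with hΔdef
  set v : ↥N := lab (g • x₀) with hv
  have hvsp : (v : G) • x₀ = g • x₀ := hlab _
  have hmemG₀ : (v : G)⁻¹ * g ∈ G₀ := by
    show ((v : G)⁻¹ * g) • x₀ = x₀
    rw [mul_smul, ← hvsp, inv_smul_smul]
  set h : ↥G₀ := ⟨(v : G)⁻¹ * g, hmemG₀⟩ with hh
  have hgvh : g = (v : G) * (h : G) := by
    rw [hh]
    exact (mul_inv_cancel_left _ _).symm
  have hlabg : ∀ x : Ω, lab (g • x) = v * cj h (lab x) := by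
    intro x
    have h1 : g • x = (v : G) • ((h : G) • x) := by rw [← mul_smul, ← hgvh]
    rw [h1, hlab_mul, hlab_conj]
  -- products over Δ
  letI : Fintype Ω := Fintype.ofFinite Ω
  let F : Finset Ω := Δ.toFinset
  have hFcard : F.card = Δ.ncard := (Set.ncard_eq_toFinset_card' Δ).symm
  have hmemF : ∀ x, x ∈ F ↔ mk x ∈ T := by
    intro x; rw [Set.mem_toFinset]; rfl
  let ι : Ω → Ω := fun x => (((lab x)⁻¹ : ↥N) : G) • x₀
  have hlabι : ∀ x, lab (ι x) = (lab x)⁻¹ := fun x => (hlab_uniq _ _ rfl).symm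
  have hmkι : ∀ x, mk (ι x) = mk x := by
    intro x
    apply Quotient.sound
    exact Or.inr (by rw [hlabι x, inv_inv])
  have hιι : ∀ x, ι (ι x) = x := by
    intro x
    show (((lab (ι x))⁻¹ : ↥N) : G) • x₀ = x
    rw [hlabι x, inv_inv, hlab x]
  have hP1 : ∏ x ∈ F, lab x = 1 := by
    refine Finset.prod_involution (fun x _ => ι x) ?_ ?_ ?_ ?_
    · intro a ha
      show lab a * lab (ι a) = 1
      rw [hlabι a, mul_inv_cancel]
    · intro a ha hfa hcon
      apply hfa
      have hcon' : ι a = a := hcon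
      have h1 : lab a = (lab a)⁻¹ := by rw [← hlabι a, hcon']
      have h2 : lab a * lab a = 1 := by
        nth_rewrite 2 [h1]
        rw [mul_inv_cancel]
      exact eq_one_of_sq hNodd h2
    · intro a ha
      show ι a ∈ F
      rw [hmemF] at ha ⊢
      rw [hmkι a]
      exact ha
    · intro a ha
      show ι (ι a) = a
      exact hιι a
  let cjHom : ↥N →* ↥N := MonoidHom.mk' (cj h) (hcj_mul h)
  have hP3 : ∏ x ∈ F, lab (g • x) = v ^ F.card * cjHom (∏ x ∈ F, lab x) := by
    calc ∏ x ∈ F, lab (g • x) = ∏ x ∈ F, (v * cjHom (lab x)) := by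
          refine Finset.prod_congr rfl ?_
          intro x _
          rw [hlabg x]
          rfl
      _ = (∏ _x ∈ F, v) * ∏ x ∈ F, cjHom (lab x) := Finset.prod_mul_distrib
      _ = v ^ F.card * cjHom (∏ x ∈ F, lab x) := by rw [Finset.prod_const, map_prod]
  have hImage : F.image (fun x => g • x) = F := by
    ext y
    rw [Finset.mem_image]
    constructor
    · rintro ⟨x, hx, rfl⟩
      rw [hmemF] at hx ⊢
      have : g • x ∈ g • Δ := Set.smul_mem_smul_set hx
      rw [hgΔ] at this
      exact this
    · intro hy
      rw [hmemF] at hy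
      have : y ∈ g • Δ := by rw [hgΔ]; exact hy
      obtain ⟨x, hx, rfl⟩ := this
      exact ⟨x, (hmemF x).mpr hx, rfl⟩
  have hP2 : ∏ x ∈ F, lab (g • x) = ∏ x ∈ F, lab x := by
    rw [← Finset.prod_image (g := fun x => g • x) (f := fun y => lab y)
      (fun x _ y _ h => MulAction.injective g h), hImage]
  have hvpow : v ^ F.card = 1 := by
    have := hP3.symm.trans hP2
    rw [hP1, map_one, mul_one] at this
    exact this
  have hv1 : v = 1 := by
    have h1 : orderOf v ∣ F.card := orderOf_dvd_iff_pow_eq_one.mpr hvpow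
    have h2 : orderOf v ∣ p ^ e := by
      apply orderOf_dvd_iff_pow_eq_one.mpr
      apply Subtype.ext
      rw [SubmonoidClass.coe_pow, OneMemClass.coe_one]
      exact hpow (v : G) v.2
    have hcop : Nat.Coprime (p ^ e) F.card := by
      apply Nat.Coprime.pow_left
      apply (Nat.Prime.coprime_iff_not_dvd hp).mpr
      rw [hFcard]
      exact hTcard
    have h3 : orderOf v ∣ Nat.gcd (p ^ e) F.card := Nat.dvd_gcd h2 h1
    rw [Nat.Coprime] at hcop
    rw [hcop] at h3
    exact orderOf_eq_one_iff.mp (Nat.dvd_one.mp h3)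
  have hg_h : g = (h : G) := by
    rw [hgvh, hv1, OneMemClass.coe_one, one_mul]
  have hgh : (h : G) • Δ = Δ := by rw [← hg_h]; exact hgΔ
  have hTT : h • T = T := by
    ext q
    obtain ⟨x, rfl⟩ := Quotient.exists_rep q
    rw [Set.mem_smul_set_iff_inv_smul_mem]
    have h1 : h⁻¹ • (mk x) = mk ((h : G)⁻¹ • x) := by
      rw [hsmulP h⁻¹ x]
      congr 1
    rw [h1]
    show (h : G)⁻¹ • x ∈ Δ ↔ x ∈ Δ
    rw [← Set.mem_smul_set_iff_inv_smul_mem, hgh]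
  have hallq := hS h (hTs h hTT)
  have hcjw : ∀ w : ↥N, cj h w = w ∨ cj h w = w⁻¹ := by
    intro w
    have h1 := hallq (mk ((w : G) • x₀))
    rw [hsmulP] at h1
    have h2 : lab ((w : G) • x₀) = lab ((h : G) • ((w : G) • x₀)) ∨
        lab ((w : G) • x₀) = (lab ((h : G) • ((w : G) • x₀)))⁻¹ := Quotient.exact h1
    have hlw : lab ((w : G) • x₀) = w := (hlab_uniq w _ rfl).symm
    have hla : lab ((h : G) • ((w : G) • x₀)) = cj h w := by rw [hlab_conj, hlw]
    rw [hlw, hla] at h2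
    rcases h2 with h3 | h3
    · exact Or.inl h3.symm
    · right
      have h4 : (w : ↥N)⁻¹ = ((cj h w)⁻¹)⁻¹ := by rw [← h3]
      rw [inv_inv] at h4
      exact h4.symm
  let φ₁ : ↥N →* ↥N := MonoidHom.mk' (fun w => cj h w * w⁻¹) (by
    intro w₁ w₂
    show cj h (w₁ * w₂) * (w₁ * w₂)⁻¹ = (cj h w₁ * w₁⁻¹) * (cj h w₂ * w₂⁻¹)
    rw [hcj_mul, mul_inv, mul_mul_mul_comm])
  let φ₂ : ↥N →* ↥N := MonoidHom.mk' (fun w => cj h w * w) (by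
    intro w₁ w₂
    show cj h (w₁ * w₂) * (w₁ * w₂) = (cj h w₁ * w₁) * (cj h w₂ * w₂)
    rw [hcj_mul, mul_mul_mul_comm])
  have hcover : ∀ w : ↥N, w ∈ φ₁.ker ∨ w ∈ φ₂.ker := by
    intro w
    rcases hcjw w with h1 | h1
    · left
      rw [MonoidHom.mem_ker]
      show cj h w * w⁻¹ = 1
      rw [h1, mul_inv_cancel]
    · right
      rw [MonoidHom.mem_ker]
      show cj h w * w = 1
      rw [h1, inv_mul_cancel]
  rcases subgroup_cover φ₁.ker φ₂.ker hcover with hall | hall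
  · have htriv : ∀ y : Ω, (h : G) • y = y := by
      intro y
      have hw : cj h (lab y) * (lab y)⁻¹ = 1 := MonoidHom.mem_ker.mp (hall (lab y))
      have hc : cj h (lab y) = lab y := by
        rwa [mul_inv_eq_one] at hw
      have e1 : (h : G) * (lab y : G) * (h : G)⁻¹ = (lab y : G) := congrArg Subtype.val hc
      have hc' : (h : G) * (lab y : G) = (lab y : G) * (h : G) := by
        calc (h : G) * (lab y : G) = ((h : G) * (lab y : G) * (h : G)⁻¹) * (h : G) := by group
          _ = (lab y : G) * (h : G) := by rw [e1]
      calc (h : G) • y = (h : G) • ((lab y : G) • x₀) := by rw [hlab y]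
        _ = ((h : G) * (lab y : G)) • x₀ := (mul_smul _ _ _).symm
        _ = ((lab y : G) * (h : G)) • x₀ := by rw [hc']
        _ = (lab y : G) • x₀ := by rw [mul_smul, hG₀ h]
        _ = y := hlab y
    rw [hg_h]
    exact hfaith _ htriv
  · have hconj : ∀ w : ↥N, (h : G) * (w : G) * (h : G)⁻¹ = (w : G)⁻¹ := by
      intro w
      have hw : cj h w * w = 1 := MonoidHom.mem_ker.mp (hall w)
      have hc : cj h w = w⁻¹ := mul_eq_one_iff_eq_inv.mp hw
      exact congrArg Subtype.val hc
    have htriv2 : ∀ y : Ω, ((h : G) * (h : G)) • y = y := by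
      intro y
      set b : ↥N := lab y with hb
      have e1 : (h : G) * (b : G) = (b : G)⁻¹ * (h : G) := by
        calc (h : G) * (b : G) = ((h : G) * (b : G) * (h : G)⁻¹) * (h : G) := by group
          _ = (b : G)⁻¹ * (h : G) := by rw [hconj b]
      have e2'' : (h : G) * (b : G)⁻¹ * (h : G)⁻¹ = (b : G) := by
        have := hconj b⁻¹
        simpa using this
      have e2 : (h : G) * (b : G)⁻¹ = (b : G) * (h : G) := by
        calc (h : G) * (b : G)⁻¹ = ((h : G) * (b : G)⁻¹ * (h : G)⁻¹) * (h : G) := by group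
          _ = (b : G) * (h : G) := by rw [e2'']
      have hkey : ((h : G) * (h : G)) * (b : G) = (b : G) * ((h : G) * (h : G)) := by
        rw [mul_assoc, e1, ← mul_assoc, e2, mul_assoc]
      calc ((h : G) * (h : G)) • y = ((h : G) * (h : G)) • ((b : G) • x₀) := by rw [hlab y]
        _ = (((h : G) * (h : G)) * (b : G)) • x₀ := (mul_smul _ _ _).symm
        _ = ((b : G) * ((h : G) * (h : G))) • x₀ := by rw [hkey]
        _ = (b : G) • (((h : G) * (h : G)) • x₀) := mul_smul _ _ _
        _ = (b : G) • x₀ := by rw [mul_smul, hG₀ h, hG₀ h]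
        _ = y := hlab y
    have hsq : (h : G) * (h : G) = 1 := hfaith _ htriv2
    rw [hg_h]
    exact eq_one_of_sq hodd hsq


lemma imprim (G Ω : Type) [Group G] [Finite G] [Finite Ω] [MulAction G Ω]
    (hfaith : ∀ g : G, (∀ x : Ω, g • x = x) → g = 1)
    (hsolv : Group.IsSolvable G) (hodd : Odd (Nat.card G))
    (N : Subgroup G) (hnorm : N.Normal)
    (htrans : ∀ x y : Ω, ∃ g : G, g • x = y)
    (x₀ : Ω)
    (u₀ : G) (hu₀N : u₀ ∈ N) (y₀ : Ω) (hmove : u₀ • y₀ ≠ y₀)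
    (z₀ : Ω) (hz₀ : ¬ ∃ u ∈ N, u • x₀ = z₀)
    (IH : ∀ (G₂ Ω₂ : Type) [Group G₂] [Finite G₂] [Finite Ω₂] [MulAction G₂ Ω₂],
      Group.IsSolvable G₂ → Odd (Nat.card G₂) → Nat.card Ω₂ < Nat.card Ω →
      ∃ Δ : Set Ω₂, ∀ g : G₂, g • Δ = Δ → ∀ x : Ω₂, g • x = x) :
    ∃ Δ : Set Ω, ∀ g : G, g • Δ = Δ → g = 1 := by
  classical
  haveI := hsolv
  -- block setoid (orbits of N)
  let rB : Ω → Ω → Prop := fun x y => ∃ u ∈ N, u • x = y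
  have hrBequiv : Equivalence rB := by
    constructor
    · intro x; exact ⟨1, one_mem N, one_smul G x⟩
    · rintro x y ⟨u, hu, rfl⟩
      exact ⟨u⁻¹, inv_mem hu, inv_smul_smul u x⟩
    · rintro x y z ⟨u, hu, rfl⟩ ⟨w, hw, rfl⟩
      exact ⟨w * u, mul_mem hw hu, mul_smul w u x⟩
  let sB : Setoid Ω := ⟨rB, hrBequiv⟩
  let B := Quotient sB
  let bl : Ω → B := Quotient.mk sB
  -- action of G on blocks
  let actB : G → B → B := fun g => Quotient.lift (fun x => bl (g • x))
    (by
      rintro x y ⟨u, hu, rfl⟩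
      apply Quotient.sound
      refine ⟨g * u * g⁻¹, hnorm.conj_mem u hu g, ?_⟩
      rw [mul_smul, mul_smul, inv_smul_smul, ← mul_smul])
  letI actBInst : MulAction G B :=
    { smul := actB
      one_smul := fun q => Quotient.inductionOn q (fun x => by
        show bl ((1 : G) • x) = bl x
        rw [one_smul])
      mul_smul := fun g₁ g₂ q => Quotient.inductionOn q (fun x => by
        show bl ((g₁ * g₂) • x) = bl (g₁ • (g₂ • x))
        rw [mul_smul]) }
  have hblsmul : ∀ (g : G) (x : Ω), g • (bl x) = bl (g • x) := fun g x => rfl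
  -- cardinality of B
  have hmoveq : bl y₀ = bl (u₀ • y₀) := Quotient.sound ⟨u₀, hu₀N, rfl⟩
  have hcardB : Nat.card B < Nat.card Ω :=
    card_lt_of_surj bl (fun q => Quotient.exists_rep q) (fun h => hmove h.symm) hmoveq
  obtain ⟨Sb, hSb⟩ := IH G B hsolv hodd hcardB
  -- the block of x₀ and its setwise stabilizer
  set β₀ : B := bl x₀ with hβ₀def
  set GB := MulAction.stabilizer G β₀ with hGBdef
  have hGBmem : ∀ h : ↥GB, (h : G) • β₀ = β₀ := fun h => h.2
  let A1 : SubMulAction ↥GB Ω :=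
    { carrier := {x : Ω | bl x = β₀}
      smul_mem' := by
        intro h x hx
        have hx' : bl x = β₀ := hx
        show bl ((h : G) • x) = β₀
        rw [← hblsmul, hx']
        exact hGBmem h }
  have hmemA1 : ∀ x : Ω, x ∈ A1 ↔ bl x = β₀ := fun x => Iff.rfl
  -- cardinality of the block
  have hz₀' : bl z₀ ≠ β₀ := by
    intro hcon
    obtain ⟨u, hu, hux⟩ := Quotient.exact hcon
    exact hz₀ ⟨u⁻¹, inv_mem hu, by rw [← hux, inv_smul_smul]⟩
  have hcardA1 : Nat.card ↥A1 < Nat.card Ω := by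
    have h1 : Nat.card ↥A1 = ({x : Ω | bl x = β₀} : Set Ω).ncard := by
      rw [← Nat.card_coe_set_eq]
      exact Nat.card_congr (Equiv.subtypeEquivRight (fun x => Iff.rfl))
    rw [h1]
    have h2 : ({x : Ω | bl x = β₀} : Set Ω) ⊂ Set.univ := by
      constructor
      · exact Set.subset_univ _
      · intro hsub
        exact hz₀' (hsub (Set.mem_univ z₀))
    have := Set.ncard_lt_ncard h2 Set.finite_univ
    rwa [Set.ncard_univ] at this
  obtain ⟨D, hD⟩ := IH ↥GB ↥A1 inferInstance
    (odd_of_dvd (Subgroup.card_subgroup_dvd_card GB) hodd) hcardA1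
  -- transversal of the blocks
  have httB : ∀ β : B, ∃ g : G, g • β₀ = β := by
    intro β
    obtain ⟨y, rfl⟩ := Quotient.exists_rep β
    obtain ⟨g, hg⟩ := htrans x₀ y
    exact ⟨g, by show bl (g • x₀) = bl y; rw [hg]⟩
  let t : B → G := fun β => Classical.choose (httB β)
  have ht : ∀ β : B, t β • β₀ = β := fun β => Classical.choose_spec (httB β)
  let D' : Set Ω := Subtype.val '' D
  let T : B → Set Ω := fun β => t β • D'
  let Cb : B → Set Ω := fun β => {x : Ω | bl x = β}
  have hD'sub : D' ⊆ Cb β₀ := by rintro x ⟨z, hz, rfl⟩; exact z.2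
  have hCbsmul : ∀ (g : G) (β : B), g • Cb β = Cb (g • β) := by
    intro g β
    ext x
    rw [Set.mem_smul_set_iff_inv_smul_mem]
    show bl (g⁻¹ • x) = β ↔ bl x = g • β
    rw [← hblsmul]
    exact inv_smul_eq_iff
  have hTsub : ∀ β, T β ⊆ Cb β := by
    intro β
    have h1 : T β ⊆ t β • Cb β₀ := Set.smul_set_mono hD'sub
    rwa [hCbsmul, ht β] at h1
  set d : ℕ := D'.ncard with hd
  set b : ℕ := (Cb β₀).ncard with hbdef
  have hTcard : ∀ β, (T β).ncard = d := fun β => ncard_smul_set _ _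
  have hCbcard : ∀ β, (Cb β).ncard = b := by
    intro β
    rw [← ht β, ← hCbsmul]
    exact ncard_smul_set _ _
  have hdleb : d ≤ b := by
    have := Set.ncard_le_ncard (hTsub β₀) (Set.toFinite _)
    rwa [hTcard] at this
  have hbodd : Odd b := by
    have horb : Cb β₀ = MulAction.orbit ↥N x₀ := by
      ext x
      show bl x = bl x₀ ↔ _
      rw [MulAction.mem_orbit_iff]
      constructor
      · intro hcon
        obtain ⟨u, hu, hux⟩ := Quotient.exact hcon
        refine ⟨⟨u⁻¹, inv_mem hu⟩, ?_⟩
        rw [Submonoid.smul_def]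
        show (u⁻¹ : G) • x₀ = x
        rw [← hux, inv_smul_smul]
      · rintro ⟨u, rfl⟩
        apply Quotient.sound
        refine ⟨(u : G)⁻¹, inv_mem u.2, ?_⟩
        rw [Submonoid.smul_def]
        show (u : G)⁻¹ • ((u : G) • x₀) = x₀
        rw [inv_smul_smul]
    have hdvd : Nat.card ↥(MulAction.orbit ↥N x₀) ∣ Nat.card ↥N := by
      rw [Nat.card_congr (MulAction.orbitEquivQuotientStabilizer ↥N x₀)]
      exact Subgroup.card_quotient_dvd_card _
    have hb2 : b = Nat.card ↥(MulAction.orbit ↥N x₀) := by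
      rw [hbdef, horb, Nat.card_coe_set_eq]
    rw [hb2]
    exact odd_of_dvd (hdvd.trans (Subgroup.card_subgroup_dvd_card N)) hodd
  -- the distinguishing set
  set Δ : Set Ω :=
    {x : Ω | (bl x ∈ Sb ∧ x ∈ T (bl x)) ∨ (bl x ∉ Sb ∧ x ∉ T (bl x))} with hΔdef
  refine ⟨Δ, ?_⟩
  intro g hg
  have hΔcap : ∀ β : B, β ∈ Sb → Δ ∩ Cb β = T β := by
    intro β hβ
    ext x
    constructor
    · rintro ⟨hxΔ, hxC⟩
      have hxC' : bl x = β := hxC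
      rcases hxΔ with ⟨h1, h2⟩ | ⟨h1, h2⟩
      · rwa [hxC'] at h2
      · exfalso; apply h1; rw [hxC']; exact hβ
    · intro hxT
      have hxC : x ∈ Cb β := hTsub β hxT
      have hxC' : bl x = β := hxC
      exact ⟨Or.inl ⟨by rw [hxC']; exact hβ, by rw [hxC']; exact hxT⟩, hxC⟩
  have hΔcap' : ∀ β : B, β ∉ Sb → Δ ∩ Cb β = Cb β \ T β := by
    intro β hβ
    ext x
    constructor
    · rintro ⟨hxΔ, hxC⟩
      have hxC' : bl x = β := hxC
      rcases hxΔ with ⟨h1, h2⟩ | ⟨h1, h2⟩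
      · exfalso; apply hβ; rw [← hxC']; exact h1
      · exact ⟨hxC, by rwa [hxC'] at h2⟩
    · rintro ⟨hxC, hxT⟩
      have hxC' : bl x = β := hxC
      exact ⟨Or.inr ⟨by rw [hxC']; exact hβ, by rw [hxC']; exact hxT⟩, hxC⟩
  have hgcap : ∀ β : B, g • (Δ ∩ Cb β) = Δ ∩ Cb (g • β) := by
    intro β; rw [Set.smul_set_inter, hg, hCbsmul]
  have hoddcontra : ∀ m : ℕ, b = 2 * m + 1 → d ≠ b - d ∨ True := fun _ _ => Or.inr trivial
  have hmemiff : ∀ β : B, β ∈ Sb ↔ g • β ∈ Sb := by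
    intro β
    constructor
    · intro hβ
      by_contra hgβ
      have h1 : (Δ ∩ Cb (g • β)).ncard = b - d := by
        rw [hΔcap' _ hgβ, Set.ncard_diff (hTsub _), hTcard, hCbcard]
      have h2 : (Δ ∩ Cb (g • β)).ncard = d := by
        rw [← hgcap, ncard_smul_set, hΔcap _ hβ, hTcard]
      obtain ⟨m, hm⟩ := hbodd
      omega
    · intro hgβ
      by_contra hβ
      have h1 : (Δ ∩ Cb (g • β)).ncard = d := by
        rw [hΔcap _ hgβ, hTcard]
      have h2 : (Δ ∩ Cb (g • β)).ncard = b - d := by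
        rw [← hgcap, ncard_smul_set, hΔcap' _ hβ, Set.ncard_diff (hTsub _), hTcard, hCbcard]
      obtain ⟨m, hm⟩ := hbodd
      omega
  have hgSb : g • Sb = Sb := by
    ext β
    rw [Set.mem_smul_set_iff_inv_smul_mem]
    constructor
    · intro h1
      have h2 := (hmemiff (g⁻¹ • β)).mp h1
      rwa [smul_inv_smul] at h2
    · intro h1
      exact (hmemiff (g⁻¹ • β)).mpr (by rwa [smul_inv_smul])
  have hfixβ : ∀ β : B, g • β = β := hSb g hgSb
  have hgT : ∀ β : B, g • T β = T β := by
    intro β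
    have h1 : g • (Δ ∩ Cb β) = Δ ∩ Cb β := by rw [hgcap, hfixβ]
    by_cases hβ : β ∈ Sb
    · rwa [hΔcap _ hβ] at h1
    · rw [hΔcap' _ hβ] at h1
      have h2 : g • Cb β = Cb β := by rw [hCbsmul, hfixβ]
      have h3 : Cb β \ (Cb β \ T β) = T β := Set.diff_diff_cancel_left (hTsub β)
      calc g • T β = g • (Cb β \ (Cb β \ T β)) := by rw [h3]
        _ = (g • Cb β) \ (g • (Cb β \ T β)) := Set.smul_set_sdiff
        _ = Cb β \ (Cb β \ T β) := by rw [h2, h1]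
        _ = T β := h3
  apply hfaith
  intro x
  set β := bl x with hβx
  have hk : (t β)⁻¹ * g * t β ∈ GB := by
    show ((t β)⁻¹ * g * t β) • β₀ = β₀
    rw [mul_smul, mul_smul, ht β, hfixβ β, inv_smul_eq_iff, ht β]
  set k : ↥GB := ⟨(t β)⁻¹ * g * t β, hk⟩ with hkdef
  have hkD' : (k : G) • D' = D' := by
    show ((t β)⁻¹ * g * t β) • D' = D'
    have h1 : g • (t β • D') = t β • D' := hgT β
    calc ((t β)⁻¹ * g * t β) • D' = (t β)⁻¹ • (g • (t β • D')) := by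
          rw [mul_smul, mul_smul]
      _ = (t β)⁻¹ • (t β • D') := by rw [h1]
      _ = D' := inv_smul_smul _ _
  have hkval : k • (Subtype.val '' D) = Subtype.val '' D := by
    have : k • (Subtype.val '' D) = (k : G) • (Subtype.val '' D) := by
      ext y
      rw [Set.mem_smul_set_iff_inv_smul_mem, Set.mem_smul_set_iff_inv_smul_mem]
      rfl
    rw [this]
    exact hkD'
  have hkD : k • D = D := smul_set_of_val A1 k D hkval
  have hfixblock := hD k hkD
  have hyA1 : (t β)⁻¹ • x ∈ A1 := by
    rw [hmemA1, ← hblsmul, ← hβx, inv_smul_eq_iff, ht β]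
  have h1 := hfixblock ⟨(t β)⁻¹ • x, hyA1⟩
  have h2 := congrArg Subtype.val h1
  rw [SubMulAction.val_smul] at h2
  have h3 : ((t β)⁻¹ * g * t β) • ((t β)⁻¹ • x) = (t β)⁻¹ • x := h2
  have h4 : (t β)⁻¹ • (g • x) = (t β)⁻¹ • x := by
    calc (t β)⁻¹ • (g • x) = ((t β)⁻¹ * g * t β) • ((t β)⁻¹ • x) := by
          rw [mul_smul, mul_smul, smul_inv_smul]
      _ = (t β)⁻¹ • x := h3
  exact smul_left_cancel _ h4


lemma transCase (G Ω : Type) [Group G] [Finite G] [Finite Ω] [MulAction G Ω]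
    (hfaith : ∀ g : G, (∀ x : Ω, g • x = x) → g = 1)
    (hsolv : Group.IsSolvable G) (hodd : Odd (Nat.card G))
    (htrans : ∀ x y : Ω, ∃ g : G, g • x = y)
    (hΩ : Nontrivial Ω)
    (IH : ∀ (G₂ Ω₂ : Type) [Group G₂] [Finite G₂] [Finite Ω₂] [MulAction G₂ Ω₂],
      Group.IsSolvable G₂ → Odd (Nat.card G₂) → Nat.card Ω₂ < Nat.card Ω →
      ∃ Δ : Set Ω₂, ∀ g : G₂, g • Δ = Δ → ∀ x : Ω₂, g • x = x) :
    ∃ Δ : Set Ω, ∀ g : G, g • Δ = Δ → g = 1 := by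
  classical
  haveI := hsolv
  -- G is nontrivial
  obtain ⟨x₁, y₁, hxy₁⟩ := hΩ
  obtain ⟨g₁, hg₁⟩ := htrans x₁ y₁
  haveI hGnt : Nontrivial G := by
    refine ⟨g₁, 1, ?_⟩
    intro hcon
    apply hxy₁
    rw [← hg₁, hcon, one_smul]
  -- last nontrivial term of the derived series
  have hex : ∃ m, derivedSeries G m = ⊥ := hsolv.solvable
  set kk := Nat.find hex with hkk
  have hkbot : derivedSeries G kk = ⊥ := Nat.find_spec hex
  have hkpos : kk ≠ 0 := by
    intro hcon
    rw [hcon, derivedSeries_zero] at hkbot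
    obtain ⟨a, b, hab⟩ := hGnt
    have ha : a ∈ (⊥ : Subgroup G) := hkbot ▸ Subgroup.mem_top a
    have hb : b ∈ (⊥ : Subgroup G) := hkbot ▸ Subgroup.mem_top b
    rw [Subgroup.mem_bot] at ha hb
    exact hab (ha.trans hb.symm)
  set A := derivedSeries G (kk - 1) with hA
  have hAne : A ≠ ⊥ := Nat.find_min hex (by omega)
  haveI hAnormal : A.Normal := derivedSeries_normal G (kk - 1)
  have hAcomm : ∀ a b : G, a ∈ A → b ∈ A → a * b = b * a := by
    intro a b ha hb
    have h1 : ⁅a, b⁆ ∈ derivedSeries G kk := by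
      have h2 : kk = (kk - 1) + 1 := by omega
      rw [h2, derivedSeries_succ]
      exact Subgroup.commutator_mem_commutator ha hb
    rw [hkbot, Subgroup.mem_bot] at h1
    exact commutatorElement_eq_one_iff_mul_comm.mp h1
  have hcardA : Nat.card ↥A ≠ 1 := by
    intro hcon
    exact hAne (Subgroup.card_eq_one.mp hcon)
  set p := (Nat.card ↥A).minFac with hpdef
  have hp : p.Prime := Nat.minFac_prime hcardA
  have hpdvd : p ∣ Nat.card ↥A := Nat.minFac_dvd _
  have hp2 : p ≠ 2 := by
    intro hcon
    have h1 : p ∣ Nat.card G := hpdvd.trans (Subgroup.card_subgroup_dvd_card A)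
    rw [hcon] at h1
    rw [Nat.odd_iff] at hodd
    omega
  haveI : Fact p.Prime := ⟨hp⟩
  letI : Fintype ↥A := Fintype.ofFinite ↥A
  obtain ⟨aa, haa⟩ := exists_prime_orderOf_dvd_card (G := ↥A) p
    (by rwa [← Nat.card_eq_fintype_card])
  have ha₀ : orderOf ((aa : G)) = p := by
    rw [← haa]
    exact orderOf_injective A.subtype A.subtype_injective aa
  set e := Nat.card ↥A with hedef
  have hepos : 1 ≤ e := Nat.card_pos
  set N : Subgroup G :=
    { carrier := {g : G | g ∈ A ∧ g ^ (p ^ e) = 1}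
      one_mem' := ⟨one_mem A, one_pow _⟩
      mul_mem' := by
        rintro a b ⟨haA, hap⟩ ⟨hbA, hbp⟩
        refine ⟨mul_mem haA hbA, ?_⟩
        have hcomm' : Commute a b := hAcomm a b haA hbA
        rw [hcomm'.mul_pow, hap, hbp, one_mul]
      inv_mem' := by
        rintro a ⟨haA, hap⟩
        exact ⟨inv_mem haA, by rw [inv_pow, hap, inv_one]⟩ } with hNdef
  have hmemN : ∀ g : G, g ∈ N ↔ g ∈ A ∧ g ^ (p ^ e) = 1 := fun g => Iff.rfl
  have hnormN : N.Normal := by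
    constructor
    intro n hn gg
    rw [hmemN] at hn ⊢
    refine ⟨hAnormal.conj_mem n hn.1 gg, ?_⟩
    rw [conj_pow, hn.2, mul_one, mul_inv_cancel]
  have hNcomm : ∀ a b : G, a ∈ N → b ∈ N → a * b = b * a := by
    intro a b ha hb
    rw [hmemN] at ha hb
    exact hAcomm a b ha.1 hb.1
  have hNpow : ∀ a ∈ N, a ^ (p ^ e) = 1 := by
    intro a ha
    rw [hmemN] at ha
    exact ha.2
  have ha₀N : (aa : G) ∈ N := by
    rw [hmemN]
    refine ⟨aa.2, ?_⟩
    apply orderOf_dvd_iff_pow_eq_one.mp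
    rw [ha₀]
    exact dvd_pow_self p (by omega)
  obtain ⟨x₀⟩ : Nonempty Ω := ⟨x₁⟩
  by_cases hNt : ∀ y : Ω, ∃ v ∈ N, v • x₀ = y
  · exact affine G Ω hfaith hsolv hodd p e hp hp2 N hnormN hNcomm hNpow
      (aa : G) ha₀N ha₀ x₀ hNt IH
  · push_neg at hNt
    obtain ⟨z₀, hz₀⟩ := hNt
    have haa1 : (aa : G) ≠ 1 := by
      intro hcon
      have h1 : orderOf ((aa : G)) = 1 := by rw [hcon, orderOf_one]
      rw [ha₀] at h1
      exact hp.one_lt.ne' h1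
    have hmove : ∃ y : Ω, (aa : G) • y ≠ y := by
      by_contra hcon
      push_neg at hcon
      exact haa1 (hfaith _ hcon)
    obtain ⟨y₀, hy₀⟩ := hmove
    refine imprim G Ω hfaith hsolv hodd N hnormN htrans x₀ (aa : G) ha₀N y₀ hy₀ z₀ ?_ IH
    intro hcon
    obtain ⟨u, hu, hux⟩ := hcon
    exact (hz₀ u hu) hux


theorem core : ∀ (n : ℕ) (G Ω : Type) [Group G] [Finite G] [Finite Ω] [MulAction G Ω],
    Group.IsSolvable G → Odd (Nat.card G) → Nat.card Ω ≤ n →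
    ∃ Δ : Set Ω, ∀ g : G, g • Δ = Δ → ∀ x : Ω, g • x = x := by
  intro n
  induction n with
  | zero =>
    intro G Ω _ _ _ _ hsolv hodd hcard
    refine ⟨∅, fun g _ x => ?_⟩
    exfalso
    haveI : Nonempty Ω := ⟨x⟩
    have := Nat.card_pos (α := Ω)
    omega
  | succ n IHn =>
    intro G Ω _ _ _ _ hsolv hodd hcard
    by_cases hsmall : Nat.card Ω ≤ 1
    · haveI : Subsingleton Ω := Finite.card_le_one_iff_subsingleton.mp hsmall
      exact ⟨∅, fun g _ x => Subsingleton.elim _ _⟩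
    · have IH : ∀ (G₂ Ω₂ : Type) [Group G₂] [Finite G₂] [Finite Ω₂] [MulAction G₂ Ω₂],
          Group.IsSolvable G₂ → Odd (Nat.card G₂) → Nat.card Ω₂ < Nat.card Ω →
          ∃ Δ : Set Ω₂, ∀ g : G₂, g • Δ = Δ → ∀ x : Ω₂, g • x = x := by
        intro G₂ Ω₂ _ _ _ _ hs ho hlt
        exact IHn G₂ Ω₂ hs ho (by omega)
      by_cases htr : ∀ x y : Ω, ∃ g : G, g • x = y
      · -- transitive case: pass to the image in the permutation group
        haveI hΩnt : Nontrivial Ω := Finite.one_lt_card_iff_nontrivial.mp (by omega)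
        set f := MulAction.toPermHom G Ω with hf
        haveI : Group.IsSolvable ↥f.range := solvable_of_surjective f.rangeRestrict_surjective
        have hoddR : Odd (Nat.card ↥f.range) :=
          odd_of_dvd (Subgroup.card_dvd_of_surjective f.rangeRestrict
            f.rangeRestrict_surjective) hodd
        have happly : ∀ (g : G) (z : Ω), (f g) z = g • z := fun g z => rfl
        have hfaithR : ∀ σ : ↥f.range, (∀ x : Ω, σ • x = x) → σ = 1 := by
          intro σ hσ
          apply Subtype.ext
          apply Equiv.ext
          intro x
          have h1 := hσ x
          rw [Subgroup.smul_def, Equiv.Perm.smul_def] at h1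
          simpa using h1
        have htransR : ∀ x y : Ω, ∃ σ : ↥f.range, σ • x = y := by
          intro x y
          obtain ⟨g, hg⟩ := htr x y
          refine ⟨⟨f g, ⟨g, rfl⟩⟩, ?_⟩
          rw [Subgroup.smul_def, Equiv.Perm.smul_def]
          show (f g) x = y
          rw [happly]
          exact hg
        obtain ⟨Δ, hΔ⟩ := transCase ↥f.range Ω hfaithR inferInstance hoddR htransR hΩnt IH
        refine ⟨Δ, ?_⟩
        intro g hg x
        have hσΔ : (⟨f g, ⟨g, rfl⟩⟩ : ↥f.range) • Δ = Δ := by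
          ext z
          rw [Set.mem_smul_set_iff_inv_smul_mem]
          have h2 : (⟨f g, ⟨g, rfl⟩⟩ : ↥f.range)⁻¹ • z = g⁻¹ • z := by
            rw [Subgroup.smul_def, Equiv.Perm.smul_def]
            show ((f g)⁻¹ : Equiv.Perm Ω) z = g⁻¹ • z
            rw [← map_inv]
            exact happly g⁻¹ z
          rw [h2]
          conv_rhs => rw [← hg]
          rw [Set.mem_smul_set_iff_inv_smul_mem]
        have h3 := hΔ _ hσΔ
        have hfg : f g = 1 := congrArg Subtype.val h3
        have h4 : (f g) x = (1 : Equiv.Perm Ω) x := by rw [hfg]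
        rw [happly] at h4
        simpa using h4
      · -- intransitive case
        push_neg at htr
        obtain ⟨x, y, hxy⟩ := htr
        have hyC : y ∉ MulAction.orbit G x := by
          intro hcon
          obtain ⟨g, hg⟩ := MulAction.mem_orbit_iff.mp hcon
          exact hxy g hg
        have hxC : x ∈ MulAction.orbit G x := MulAction.mem_orbit_self x
        let A1 : SubMulAction G Ω :=
          { carrier := MulAction.orbit G x
            smul_mem' := by
              rintro g z ⟨h, rfl⟩
              exact ⟨g * h, by show (g * h) • x = g • (h • x); rw [mul_smul]⟩ }
        let A2 : SubMulAction G Ω :=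
          { carrier := (MulAction.orbit G x)ᶜ
            smul_mem' := by
              intro g z hz hcon
              obtain ⟨h, hh⟩ := MulAction.mem_orbit_iff.mp hcon
              exact hz (MulAction.mem_orbit_iff.mpr
                ⟨g⁻¹ * h, by rw [mul_smul, hh, inv_smul_smul]⟩) }
        have hcard1 : Nat.card ↥A1 < Nat.card Ω := by
          have h1 : Nat.card ↥A1 = (MulAction.orbit G x).ncard := by
            rw [← Nat.card_coe_set_eq]
            exact Nat.card_congr (Equiv.subtypeEquivRight fun z => Iff.rfl)
          rw [h1]
          have h2 : MulAction.orbit G x ⊂ Set.univ :=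
            ⟨Set.subset_univ _, fun hsub => hyC (hsub (Set.mem_univ y))⟩
          have h3 := Set.ncard_lt_ncard h2 Set.finite_univ
          rwa [Set.ncard_univ] at h3
        have hcard2 : Nat.card ↥A2 < Nat.card Ω := by
          have h1 : Nat.card ↥A2 = ((MulAction.orbit G x)ᶜ).ncard := by
            rw [← Nat.card_coe_set_eq]
            exact Nat.card_congr (Equiv.subtypeEquivRight fun z => Iff.rfl)
          rw [h1]
          have h2 : (MulAction.orbit G x)ᶜ ⊂ Set.univ :=
            ⟨Set.subset_univ _, fun hsub => (hsub (Set.mem_univ x)) hxC⟩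
          have h3 := Set.ncard_lt_ncard h2 Set.finite_univ
          rwa [Set.ncard_univ] at h3
        obtain ⟨Δ₁, hΔ₁⟩ := IHn G ↥A1 hsolv hodd (by omega)
        obtain ⟨Δ₂, hΔ₂⟩ := IHn G ↥A2 hsolv hodd (by omega)
        refine ⟨Subtype.val '' Δ₁ ∪ Subtype.val '' Δ₂, ?_⟩
        intro g hg z
        have hval1 : Subtype.val '' Δ₁ ⊆ MulAction.orbit G x := by
          rintro w ⟨u, hu, rfl⟩; exact u.2
        have hval2 : Subtype.val '' Δ₂ ⊆ (MulAction.orbit G x)ᶜ := by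
          rintro w ⟨u, hu, rfl⟩; exact u.2
        have hcapC : (Subtype.val '' Δ₁ ∪ Subtype.val '' Δ₂) ∩ MulAction.orbit G x
            = Subtype.val '' Δ₁ := by
          ext w
          constructor
          · rintro ⟨hw1 | hw2, hwC⟩
            · exact hw1
            · exact absurd hwC (hval2 hw2)
          · intro hw
            exact ⟨Or.inl hw, hval1 hw⟩
        have hcapC' : (Subtype.val '' Δ₁ ∪ Subtype.val '' Δ₂) ∩ (MulAction.orbit G x)ᶜ
            = Subtype.val '' Δ₂ := by
          ext w
          constructor
          · rintro ⟨hw1 | hw2, hwC⟩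
            · exact absurd (hval1 hw1) hwC
            · exact hw2
          · intro hw
            exact ⟨Or.inr hw, hval2 hw⟩
        have hgC : g • MulAction.orbit G x = MulAction.orbit G x := MulAction.smul_orbit g x
        have hgC' : g • (MulAction.orbit G x)ᶜ = (MulAction.orbit G x)ᶜ := by
          rw [Set.smul_set_compl, hgC]
        have h1 : g • (Subtype.val '' Δ₁) = Subtype.val '' Δ₁ := by
          rw [← hcapC, Set.smul_set_inter, hg, hgC]
        have h2 : g • (Subtype.val '' Δ₂) = Subtype.val '' Δ₂ := by
          rw [← hcapC', Set.smul_set_inter, hg, hgC']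
        by_cases hz : z ∈ MulAction.orbit G x
        · have h3 : g • Δ₁ = Δ₁ := smul_set_of_val A1 g Δ₁ h1
          have h4 := hΔ₁ g h3 ⟨z, hz⟩
          have h5 := congrArg Subtype.val h4
          rwa [SubMulAction.val_smul] at h5
        · have h3 : g • Δ₂ = Δ₂ := smul_set_of_val A2 g Δ₂ h2
          have h4 := hΔ₂ g h3 ⟨z, hz⟩
          have h5 := congrArg Subtype.val h4
          rwa [SubMulAction.val_smul] at h5


end GluckOdd

open GluckOdd in
/-- Let `H` be a finite solvable group of odd order acting faithfully on a
finite nonempty set `Ω`. Then there is a nonempty subset `Δ ⊆ Ω` with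
`π(H) = π(|H : H_Δ|)`, where `H_Δ` is the setwise stabilizer of `Δ`. -/
theorem exists_subset_stabilizer_index_odd (H Ω : Type) [Group H] [Finite H]
    [Group.IsSolvable H] [Finite Ω] [Nonempty Ω] [MulAction H Ω]
    (hfaith : ∀ g : H, (∀ x : Ω, g • x = x) → g = 1)
    (hodd : Odd (Nat.card H)) :
    ∃ Δ : Set Ω, Δ.Nonempty ∧
      (Nat.card H).primeFactors = ((MulAction.stabilizer H Δ).index).primeFactors := by
  classical
  by_cases hH : Nat.card H = 1
  · refine ⟨Set.univ, Set.univ_nonempty, ?_⟩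
    have hidx : (MulAction.stabilizer H (Set.univ : Set Ω)).index = 1 :=
      Nat.dvd_one.mp (hH ▸ Subgroup.index_dvd_card _)
    rw [hH, hidx]
  · obtain ⟨Δ, hΔ⟩ := core (Nat.card Ω) H Ω inferInstance hodd le_rfl
    have hreg : ∀ g : H, g • Δ = Δ → g = 1 := fun g hg => hfaith g (hΔ g hg)
    refine ⟨Δ, ?_, ?_⟩
    · rw [Set.nonempty_iff_ne_empty]
      intro hcon
      apply hH
      have hall : ∀ g : H, g = 1 := by
        intro g
        apply hreg
        rw [hcon, Set.smul_set_empty]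
      haveI : Subsingleton H := ⟨fun a b => (hall a).trans (hall b).symm⟩
      exact Nat.card_eq_one_iff_unique.mpr ⟨inferInstance, inferInstance⟩
    · have hbot : MulAction.stabilizer H Δ = ⊥ := by
        rw [Subgroup.eq_bot_iff_forall]
        intro g hg
        exact hreg g hg
      rw [hbot, Subgroup.index_bot]
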